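/- Fix d ≥ 1 and let q and r be two d×d arrays of complex numbers that are admissible with off-diagonal entries different from 1, i.e. for all i ≠ j: q_{ij} ≠ 0, q_{ji} = q_{ij}^{-1}, and q_{ij} ≠ 1, and likewise for r. Let I_q denote the two-sided ideal of ℂ⟨x₁,…,x_d⟩ generated by {x_i x_j − q_{ij} x_j x_i : i ≠ j}, and similarly I_r. For a unitary d×d matrix U = (u_{ij}) let Φ_U be the algebra automorphism of ℂ⟨x₁,…,x_d⟩ determined by Φ_U(x_i) = Σ_j u_{ij} x_j. Then there exists a unitary U with Φ_U(I_q) = I_r if and only if there exists a permutation σ of {1,…,d} such that r_{σ(i)σ(j)} = q_{ij} for all i ≠ j. Moreover, in that case the unitaries U with Φ_U(I_q) = I_r are exactly those of the form u_{ij} = λ_i when j = σ(i) and u_{ij} = 0 otherwise, where |λ_i| = 1 for all i and σ is a permutation with r_{σ(i)σ(j)} = q_{ij} for all i ≠ j. -/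

import Mathlib

noncomputable section

/-- The free (noncommutative polynomial) algebra `ℂ⟨x₁,…,x_d⟩`. -/
abbrev FreeAlg (d : ℕ) : Type := MonoidAlgebra ℂ (FreeMonoid (Fin d))

/-- The generator `x_i` of `ℂ⟨x₁,…,x_d⟩`. -/
def Xg (d : ℕ) (i : Fin d) : FreeAlg d :=
  MonoidAlgebra.of ℂ (FreeMonoid (Fin d)) (FreeMonoid.of i)

/-- Evaluation `p ↦ p(T)`. -/
def evalTuple {d : ℕ} {A : Type*} [Semiring A] [Algebra ℂ A] (T : Fin d → A) :
    FreeAlg d →ₐ[ℂ] A :=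
  MonoidAlgebra.lift ℂ A (FreeMonoid (Fin d)) (FreeMonoid.lift T)

/-- The unitary change of variables `Φ_U` determined by `Φ_U(x_i) = Σ_j u_{ij} x_j`. -/
def PhiU {d : ℕ} (U : Matrix (Fin d) (Fin d) ℂ) : FreeAlg d →ₐ[ℂ] FreeAlg d :=
  evalTuple (fun i => ∑ j : Fin d, U i j • Xg d j)

/-- The `q`-commutation ideal `I_q`, generated by `{x_i x_j − q_{ij} x_j x_i : i ≠ j}`. -/
def qIdeal {d : ℕ} (q : Fin d → Fin d → ℂ) : TwoSidedIdeal (FreeAlg d) :=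
  TwoSidedIdeal.span
    {p | ∃ i j : Fin d, i ≠ j ∧ p = Xg d i * Xg d j - q i j • (Xg d j * Xg d i)}

namespace Aux
variable {d : ℕ}

/-- two letter word -/
def w2 (k l : Fin d) : FreeMonoid (Fin d) := FreeMonoid.of k * FreeMonoid.of l

lemma w2_eq_iff {k l k' l' : Fin d} : w2 k l = w2 k' l' ↔ k = k' ∧ l = l' := by
  constructor
  · intro h
    have : ([k, l] : List (Fin d)) = [k', l'] := h
    simpa using this
  · rintro ⟨rfl, rfl⟩; rfl

lemma Xg_mul (k l : Fin d) : Xg d k * Xg d l = MonoidAlgebra.single (w2 k l) (1:ℂ) := by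
  simp [Xg, MonoidAlgebra.of_apply, MonoidAlgebra.single_mul_single, w2]

lemma smul_single (c : ℂ) (m : FreeMonoid (Fin d)) (a : ℂ) :
    c • MonoidAlgebra.single m a = MonoidAlgebra.single m (c * a) := by
  simp [Finsupp.smul_single, smul_eq_mul]

lemma evalTuple_Xg {A : Type*} [Semiring A] [Algebra ℂ A] (T : Fin d → A) (i : Fin d) :
    evalTuple T (Xg d i) = T i := by
  simp [evalTuple, Xg]

lemma PhiU_Xg (U : Matrix (Fin d) (Fin d) ℂ) (i : Fin d) :
    PhiU U (Xg d i) = ∑ j : Fin d, U i j • Xg d j := by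
  simp [PhiU, evalTuple_Xg]

end Aux

namespace Aux
variable {d : ℕ}

lemma sum2_apply (c : Fin d → Fin d → ℂ) (k0 l0 : Fin d) :
    ((∑ k : Fin d, ∑ l : Fin d, MonoidAlgebra.single (w2 k l) (c k l)) : FreeAlg d).coeff (w2 k0 l0)
      = c k0 l0 := by
  classical
  rw [MonoidAlgebra.coeff_sum, Finsupp.finset_sum_apply]
  rw [show (∑ k : Fin d, (∑ l : Fin d, MonoidAlgebra.single (w2 k l) (c k l) : FreeAlg d).coeff (w2 k0 l0))
      = ∑ k : Fin d, ∑ l : Fin d, (MonoidAlgebra.single (w2 k l) (c k l) : FreeAlg d).coeff (w2 k0 l0)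
    from Finset.sum_congr rfl fun k _ => by rw [MonoidAlgebra.coeff_sum, Finsupp.finset_sum_apply]]
  simp only [MonoidAlgebra.coeff_single_apply, w2_eq_iff, ite_and]
  simp [Finset.sum_ite_eq', Finset.sum_ite_eq]

lemma PhiU_gen (U : Matrix (Fin d) (Fin d) ℂ) (c : ℂ) (i j : Fin d) :
    PhiU U (Xg d i * Xg d j - c • (Xg d j * Xg d i))
      = ∑ k : Fin d, ∑ l : Fin d,
          MonoidAlgebra.single (w2 k l) (U i k * U j l - c * (U j k * U i l)) := by
  rw [map_sub, map_smul, map_mul, map_mul, PhiU_Xg, PhiU_Xg, Finset.sum_mul_sum,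
    Finset.sum_mul_sum]
  simp only [smul_mul_smul_comm, Xg_mul, smul_single, mul_one, Finset.smul_sum,
    ← Finset.sum_sub_distrib]
  simp [Finsupp.single_sub]

lemma PhiU_gen_apply (U : Matrix (Fin d) (Fin d) ℂ) (c : ℂ) (i j k l : Fin d) :
    (PhiU U (Xg d i * Xg d j - c • (Xg d j * Xg d i))).coeff (w2 k l)
      = U i k * U j l - c * (U j k * U i l) := by
  rw [PhiU_gen, sum2_apply]

end Aux

namespace Aux
variable {d : ℕ}

/-- The set of "monomial-sandwiched" generators. -/
def TSet (q : Fin d → Fin d → ℂ) : Set (FreeAlg d) :=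
  {p | ∃ (i j : Fin d) (u w : FreeMonoid (Fin d)), i ≠ j ∧
    p = MonoidAlgebra.single (u * w2 i j * w) (1:ℂ)
        - MonoidAlgebra.single (u * w2 j i * w) (q i j)}

def Tmod (q : Fin d → Fin d → ℂ) : Submodule ℂ (FreeAlg d) := Submodule.span ℂ (TSet q)

lemma single_mul_tset {q : Fin d → Fin d → ℂ} {p : FreeAlg d} (hp : p ∈ TSet q)
    (v : FreeMonoid (Fin d)) (c : ℂ) :
    (MonoidAlgebra.single v c : FreeAlg d) * p ∈ Tmod q := by
  obtain ⟨i, j, u, w, hij, rfl⟩ := hp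
  have : (MonoidAlgebra.single v c : FreeAlg d) *
      (MonoidAlgebra.single (u * w2 i j * w) (1:ℂ)
        - MonoidAlgebra.single (u * w2 j i * w) (q i j))
      = c • (MonoidAlgebra.single ((v*u) * w2 i j * w) (1:ℂ)
        - MonoidAlgebra.single ((v*u) * w2 j i * w) (q i j)) := by
    rw [mul_sub, MonoidAlgebra.single_mul_single, MonoidAlgebra.single_mul_single,
      smul_sub, smul_single, smul_single, mul_one]
    congr 2 <;> first | simp [mul_assoc] | ring
  rw [this]
  exact Submodule.smul_mem _ _ (Submodule.subset_span ⟨i, j, v*u, w, hij, rfl⟩)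

lemma tset_mul_single {q : Fin d → Fin d → ℂ} {p : FreeAlg d} (hp : p ∈ TSet q)
    (v : FreeMonoid (Fin d)) (c : ℂ) :
    p * (MonoidAlgebra.single v c : FreeAlg d) ∈ Tmod q := by
  obtain ⟨i, j, u, w, hij, rfl⟩ := hp
  have : (MonoidAlgebra.single (u * w2 i j * w) (1:ℂ)
        - MonoidAlgebra.single (u * w2 j i * w) (q i j)) *
      (MonoidAlgebra.single v c : FreeAlg d)
      = c • (MonoidAlgebra.single (u * w2 i j * (w*v)) (1:ℂ)
        - MonoidAlgebra.single (u * w2 j i * (w*v)) (q i j)) := by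
    rw [sub_mul, MonoidAlgebra.single_mul_single, MonoidAlgebra.single_mul_single,
      smul_sub, smul_single, smul_single, one_mul, mul_one]
    congr 2 <;> first | simp [mul_assoc] | ring
  rw [this]
  exact Submodule.smul_mem _ _ (Submodule.subset_span ⟨i, j, u, w*v, hij, rfl⟩)

lemma mul_mem_Tmod {q : Fin d → Fin d → ℂ} (x : FreeAlg d) {p : FreeAlg d}
    (hp : p ∈ Tmod q) : x * p ∈ Tmod q := by
  refine Submodule.span_induction ?_ ?_ ?_ ?_ hp
  · intro p hp
    induction x using MonoidAlgebra.induction_linear with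
    | zero => simpa using (Tmod q).zero_mem
    | add a b ha hb => rw [add_mul]; exact (Tmod q).add_mem ha hb
    | single v c => exact single_mul_tset hp v c
  · simpa using (Tmod q).zero_mem
  · intro a b _ _ ha hb; rw [mul_add]; exact (Tmod q).add_mem ha hb
  · intro c a _ ha; rw [mul_smul_comm]; exact (Tmod q).smul_mem c ha

lemma Tmod_mul_mem {q : Fin d → Fin d → ℂ} (x : FreeAlg d) {p : FreeAlg d}
    (hp : p ∈ Tmod q) : p * x ∈ Tmod q := by
  refine Submodule.span_induction ?_ ?_ ?_ ?_ hp
  · intro p hp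
    induction x using MonoidAlgebra.induction_linear with
    | zero => simpa using (Tmod q).zero_mem
    | add a b ha hb => rw [mul_add]; exact (Tmod q).add_mem ha hb
    | single v c => exact tset_mul_single hp v c
  · simpa using (Tmod q).zero_mem
  · intro a b _ _ ha hb; rw [add_mul]; exact (Tmod q).add_mem ha hb
  · intro c a _ ha; rw [smul_mul_assoc]; exact (Tmod q).smul_mem c ha

lemma qIdeal_le_Tmod {q : Fin d → Fin d → ℂ} {p : FreeAlg d} (hp : p ∈ qIdeal q) :
    p ∈ Tmod q := by
  let J : TwoSidedIdeal (FreeAlg d) := TwoSidedIdeal.mk' (Tmod q)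
    (Tmod q).zero_mem (fun ha hb => (Tmod q).add_mem ha hb)
    (fun ha => (Tmod q).neg_mem ha)
    (fun {x y} hy => mul_mem_Tmod x hy) (fun {x y} hx => Tmod_mul_mem y hx)
  have h := TwoSidedIdeal.mem_span_iff.1 hp J ?_
  · simpa [J, TwoSidedIdeal.mem_mk'] using h
  · rintro p ⟨i, j, hij, rfl⟩
    have : Xg d i * Xg d j - q i j • (Xg d j * Xg d i)
        = MonoidAlgebra.single ((1:FreeMonoid (Fin d)) * w2 i j * 1) (1:ℂ)
          - MonoidAlgebra.single ((1:FreeMonoid (Fin d)) * w2 j i * 1) (q i j) := by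
      rw [Xg_mul, Xg_mul, smul_single, mul_one, one_mul, mul_one, one_mul, mul_one]
    simp only [J, SetLike.mem_coe, TwoSidedIdeal.mem_mk']
    rw [this]
    exact Submodule.subset_span ⟨i, j, 1, 1, hij, rfl⟩
end Aux

namespace Aux
variable {d : ℕ}

lemma sandwich_eq_w2 {u w : FreeMonoid (Fin d)} {i j k l : Fin d}
    (h : u * w2 i j * w = w2 k l) : u = 1 ∧ w = 1 ∧ i = k ∧ j = l := by
  have hlen := congrArg FreeMonoid.length h
  simp only [FreeMonoid.length_mul, w2, FreeMonoid.length_of] at hlen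
  have hu : FreeMonoid.length u = 0 := by omega
  have hw : FreeMonoid.length w = 0 := by omega
  rw [FreeMonoid.length_eq_zero] at hu hw
  subst hu; subst hw
  rw [one_mul, mul_one] at h
  have := w2_eq_iff.1 h
  exact ⟨rfl, rfl, this.1, this.2⟩

lemma sandwich_ne_w2 {u w : FreeMonoid (Fin d)} {i j k l : Fin d}
    (hne : ¬ (u = 1 ∧ w = 1)) : u * w2 i j * w ≠ w2 k l := by
  intro h
  obtain ⟨h1, h2, -, -⟩ := sandwich_eq_w2 h
  exact hne ⟨h1, h2⟩

/-- coefficient functional -/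
def coeffL (m : FreeMonoid (Fin d)) : FreeAlg d →ₗ[ℂ] ℂ where
  toFun p := p.coeff m
  map_add' _ _ := rfl
  map_smul' _ _ := rfl

@[simp] lemma coeffL_apply (m : FreeMonoid (Fin d)) (p : FreeAlg d) : coeffL m p = p.coeff m := rfl

lemma mem_apply_diag {q : Fin d → Fin d → ℂ} {p : FreeAlg d} (hp : p ∈ qIdeal q)
    (k : Fin d) : p.coeff (w2 k k) = 0 := by
  classical
  have hT := qIdeal_le_Tmod hp
  have hker : Tmod q ≤ LinearMap.ker (coeffL (w2 k k)) := by
    rw [Tmod, Submodule.span_le]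
    rintro x ⟨i, j, u, w, hij, rfl⟩
    simp only [SetLike.mem_coe, LinearMap.mem_ker, map_sub, coeffL_apply,
      MonoidAlgebra.single_apply]
    by_cases huw : u = 1 ∧ w = 1
    · obtain ⟨rfl, rfl⟩ := huw
      rw [one_mul, mul_one, one_mul, mul_one]
      rw [if_neg (fun h => hij ((w2_eq_iff.1 h).1.trans (w2_eq_iff.1 h).2.symm)),
        if_neg (fun h => hij ((w2_eq_iff.1 h).2.trans (w2_eq_iff.1 h).1.symm))]
      ring
    · rw [if_neg (sandwich_ne_w2 huw), if_neg (sandwich_ne_w2 huw)]; ring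
  simpa using hker hT

lemma mem_apply_off {q : Fin d → Fin d → ℂ} {p : FreeAlg d} (hp : p ∈ qIdeal q)
    {k l : Fin d} (hkl : k ≠ l) (hinv : q l k * q k l = 1) :
    p.coeff (w2 k l) + q l k * p.coeff (w2 l k) = 0 := by
  classical
  have hT := qIdeal_le_Tmod hp
  have hker : Tmod q ≤ LinearMap.ker
      ((coeffL (w2 k l))
        + q l k • (coeffL (w2 l k))) := by
    rw [Tmod, Submodule.span_le]
    rintro x ⟨i, j, u, w, hij, rfl⟩
    simp only [SetLike.mem_coe, LinearMap.mem_ker, LinearMap.add_apply, LinearMap.smul_apply,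
      map_sub, coeffL_apply, MonoidAlgebra.single_apply, smul_eq_mul]
    by_cases huw : u = 1 ∧ w = 1
    · obtain ⟨rfl, rfl⟩ := huw
      rw [one_mul, mul_one, one_mul, mul_one]
      simp only [w2_eq_iff]
      rcases eq_or_ne i k with rfl | hik
      · rcases eq_or_ne j l with rfl | hjl
        · simp only [w2_eq_iff]
          simp [hkl, Ne.symm hkl]
          linear_combination -hinv
        · simp [w2_eq_iff, hjl, hkl, Ne.symm hkl]
      · rcases eq_or_ne i l with rfl | hil
        · rcases eq_or_ne j k with rfl | hjk
          · simp only [w2_eq_iff]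
            simp [hkl, Ne.symm hkl]
          · simp [w2_eq_iff, hik, hjk]
        · simp [w2_eq_iff, hik, hil]
    · rw [if_neg (sandwich_ne_w2 huw), if_neg (sandwich_ne_w2 huw),
        if_neg (sandwich_ne_w2 huw), if_neg (sandwich_ne_w2 huw)]
      ring
  simpa using hker hT

end Aux

namespace Aux
variable {d : ℕ}

lemma freealg_hom_ext {A : Type*} [Semiring A] [Algebra ℂ A] {f g : FreeAlg d →ₐ[ℂ] A}
    (h : ∀ i, f (Xg d i) = g (Xg d i)) : f = g := by
  apply MonoidAlgebra.algHom_ext ?_ (Subsingleton.elim _ _)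
  intro m
  induction m using FreeMonoid.inductionOn' with
  | one => rw [show (MonoidAlgebra.single (1 : FreeMonoid (Fin d)) (1:ℂ) : FreeAlg d) = 1 from
      MonoidAlgebra.one_def.symm, map_one, map_one]
  | of_mul b a ih =>
      have h2 : (MonoidAlgebra.single (FreeMonoid.of b * a) (1:ℂ) : FreeAlg d)
          = MonoidAlgebra.single (FreeMonoid.of b) 1 * MonoidAlgebra.single a 1 := by
        rw [MonoidAlgebra.single_mul_single, one_mul]
      rw [h2, map_mul, map_mul, ih,
        show (MonoidAlgebra.single (FreeMonoid.of b) (1:ℂ) : FreeAlg d) = Xg d b from rfl, h b]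

lemma smul_mem_qIdeal {q : Fin d → Fin d → ℂ} (c : ℂ) {p : FreeAlg d} (hp : p ∈ qIdeal q) :
    c • p ∈ qIdeal q := by
  have : c • p = (c • (1 : FreeAlg d)) * p := by rw [smul_mul_assoc, one_mul]
  rw [this]
  exact TwoSidedIdeal.mul_mem_left _ _ _ hp

lemma gen_mem_qIdeal (q : Fin d → Fin d → ℂ) {i j : Fin d} (hij : i ≠ j) :
    Xg d i * Xg d j - q i j • (Xg d j * Xg d i) ∈ qIdeal q :=
  TwoSidedIdeal.subset_span ⟨i, j, hij, rfl⟩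

/-- If `Φ_U` sends each generator `x_i` to `c i • x_{τ i}` and `r (τ i) (τ j) = q i j`,
then `Φ_U` maps `I_q` into `I_r`. -/
lemma image_subset_of_scaled_perm {q r : Fin d → Fin d → ℂ} (U : Matrix (Fin d) (Fin d) ℂ)
    (τ : Equiv.Perm (Fin d)) (c : Fin d → ℂ)
    (hX : ∀ i, PhiU U (Xg d i) = c i • Xg d (τ i))
    (hcomp : ∀ i j : Fin d, i ≠ j → r (τ i) (τ j) = q i j)
    {p : FreeAlg d} (hp : p ∈ qIdeal q) : PhiU U p ∈ qIdeal r := by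
  let J : TwoSidedIdeal (FreeAlg d) := TwoSidedIdeal.mk'
    {p | PhiU U p ∈ qIdeal r}
    (by simp)
    (fun {a b} ha hb => by simp only [Set.mem_setOf_eq, map_add] at *
                           exact TwoSidedIdeal.add_mem _ ha hb)
    (fun {a} ha => by simp only [Set.mem_setOf_eq, map_neg] at *
                      exact TwoSidedIdeal.neg_mem _ ha)
    (fun {a b} hb => by simp only [Set.mem_setOf_eq, map_mul] at *
                        exact TwoSidedIdeal.mul_mem_left _ _ _ hb)
    (fun {a b} ha => by simp only [Set.mem_setOf_eq, map_mul] at *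
                        exact TwoSidedIdeal.mul_mem_right _ _ _ ha)
  have key : p ∈ J := by
    refine TwoSidedIdeal.mem_span_iff.1 hp J ?_
    rintro x ⟨i, j, hij, rfl⟩
    rw [SetLike.mem_coe, TwoSidedIdeal.mem_mk']
    show PhiU U _ ∈ qIdeal r
    have : PhiU U (Xg d i * Xg d j - q i j • (Xg d j * Xg d i))
        = (c i * c j) • (Xg d (τ i) * Xg d (τ j) - r (τ i) (τ j) • (Xg d (τ j) * Xg d (τ i))) := by
      rw [map_sub, map_smul, map_mul, map_mul, hX, hX, hcomp i j hij]
      rw [smul_mul_smul_comm, smul_mul_smul_comm]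
      rw [smul_sub, smul_smul,
        show q i j * (c j * c i) = c i * c j * q i j from by ring, ← mul_smul]
    rw [this]
    exact smul_mem_qIdeal _ (gen_mem_qIdeal r (fun h => hij (τ.injective h)))
  rwa [TwoSidedIdeal.mem_mk'] at key

end Aux

namespace Aux
variable {d : ℕ}

lemma scaled_perm_of_orth (U : Matrix (Fin d) (Fin d) ℂ)
    (hU : U ∈ Matrix.unitaryGroup (Fin d) ℂ)
    (h0 : ∀ i j : Fin d, i ≠ j → ∀ k, U i k * U j k = 0) :
    ∃ (σ : Equiv.Perm (Fin d)) (lam : Fin d → ℂ), (∀ i, ‖lam i‖ = 1) ∧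
      (∀ i j : Fin d, U i j = if j = σ i then lam i else 0) := by
  classical
  have hsU : star U * U = 1 := Matrix.mem_unitaryGroup_iff'.1 hU
  have hentry : ∀ k l : Fin d, (∑ m : Fin d, (starRingEnd ℂ) (U m k) * U m l)
      = (1 : Matrix (Fin d) (Fin d) ℂ) k l := by
    intro k l
    have := congrFun (congrFun hsU k) l
    rw [Matrix.mul_apply] at this
    simpa [Matrix.star_eq_conjTranspose, Matrix.conjTranspose_apply] using this
  have col_nonzero : ∀ k : Fin d, ∃ i, U i k ≠ 0 := by
    intro k
    by_contra hc
    push_neg at hc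
    have := hentry k k
    rw [Matrix.one_apply_eq] at this
    simp [hc] at this
  have col_unique : ∀ (k i j : Fin d), i ≠ j → U i k ≠ 0 → U j k = 0 := by
    intro k i j hij hi
    have := h0 i j hij k
    rcases mul_eq_zero.1 this with h | h
    · exact absurd h hi
    · exact h
  set g : Fin d → Fin d := fun k => (col_nonzero k).choose with hg
  have hgspec : ∀ k, U (g k) k ≠ 0 := fun k => (col_nonzero k).choose_spec
  have hginj : Function.Injective g := by
    intro k k' hkk'
    by_contra hne
    have hoff := hentry k k'
    rw [Matrix.one_apply_ne hne] at hoff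
    rw [Finset.sum_eq_single (g k)] at hoff
    · have h1 : U (g k) k' ≠ 0 := by rw [hkk']; exact hgspec k'
      exact (mul_ne_zero (by simpa using hgspec k) h1) hoff
    · intro m _ hm
      have : U m k = 0 := col_unique k (g k) m (fun h => hm h.symm) (hgspec k)
      simp [this]
    · intro hm; exact absurd (Finset.mem_univ _) hm
  have hgbij : Function.Bijective g := (Finite.injective_iff_bijective).1 hginj
  let e : Equiv.Perm (Fin d) := Equiv.ofBijective g hgbij
  refine ⟨e.symm, fun i => U i (e.symm i), ?_, ?_⟩
  · -- norm 1
    intro i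
    have hdiag := hentry (e.symm i) (e.symm i)
    rw [Matrix.one_apply_eq] at hdiag
    have hgei : ∀ i, g (e.symm i) = i := fun i => e.apply_symm_apply i
    rw [Finset.sum_eq_single i] at hdiag
    · rw [mul_comm, Complex.mul_conj] at hdiag
      have h2 : Complex.normSq (U i (e.symm i)) = 1 := by exact_mod_cast hdiag
      rw [Complex.norm_def, h2, Real.sqrt_one]
    · intro m _ hm
      have hne0 : U i (e.symm i) ≠ 0 := by
        have h := hgspec (e.symm i); rwa [hgei] at h
      have : U m (e.symm i) = 0 := col_unique (e.symm i) i m (fun h => hm h.symm) hne0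
      simp [this]
    · intro hm; exact absurd (Finset.mem_univ _) hm
  · intro i j
    have hgei : ∀ i, g (e.symm i) = i := fun i => e.apply_symm_apply i
    by_cases hj : j = e.symm i
    · rw [if_pos hj, hj]
    · rw [if_neg hj]
      by_contra hne
      have hi : i = g j := by
        by_contra hig
        exact hne (col_unique j (g j) i (fun h => hig h.symm) (hgspec j))
      apply hj
      apply hginj
      rw [hgei, ← hi]
end Aux

namespace Aux
variable {d : ℕ}

lemma PhiU_scaled_Xg (U : Matrix (Fin d) (Fin d) ℂ) (σ : Equiv.Perm (Fin d))
    (lam : Fin d → ℂ) (hU : ∀ i j : Fin d, U i j = if j = σ i then lam i else 0) (i : Fin d) :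
    PhiU U (Xg d i) = lam i • Xg d (σ i) := by
  classical
  rw [PhiU_Xg]
  simp only [hU, ite_smul, zero_smul]
  simp [Finset.sum_ite_eq']

lemma main2 (q r : Fin d → Fin d → ℂ)
    (hq : ∀ i j : Fin d, i ≠ j → q i j ≠ 0 ∧ q j i = (q i j)⁻¹ ∧ q i j ≠ 1)
    (hr : ∀ i j : Fin d, i ≠ j → r i j ≠ 0 ∧ r j i = (r i j)⁻¹ ∧ r i j ≠ 1)
    (U : Matrix (Fin d) (Fin d) ℂ) (hU : U ∈ Matrix.unitaryGroup (Fin d) ℂ) :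
    (⇑(PhiU U) '' (qIdeal q : Set (FreeAlg d)) = (qIdeal r : Set (FreeAlg d)) ↔
      ∃ (σ : Equiv.Perm (Fin d)) (lam : Fin d → ℂ),
        (∀ i, ‖lam i‖ = 1) ∧
        (∀ i j : Fin d, i ≠ j → r (σ i) (σ j) = q i j) ∧
        (∀ i j : Fin d, U i j = if j = σ i then lam i else 0)) := by
  classical
  constructor
  · intro himg
    have hsub : ∀ p, p ∈ qIdeal q → PhiU U p ∈ qIdeal r := by
      intro p hp
      have : PhiU U p ∈ ⇑(PhiU U) '' (qIdeal q : Set (FreeAlg d)) :=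
        Set.mem_image_of_mem _ (by exact hp)
      rw [himg] at this
      exact this
    have h0 : ∀ i j : Fin d, i ≠ j → ∀ k, U i k * U j k = 0 := by
      intro i j hij k
      have hmem := hsub _ (gen_mem_qIdeal q hij)
      have hd := mem_apply_diag hmem k
      rw [PhiU_gen_apply] at hd
      have hfac : U i k * U j k * (1 - q i j) = 0 := by linear_combination hd
      rcases mul_eq_zero.1 hfac with h | h
      · exact h
      · exact absurd (by linear_combination -h) (hq i j hij).2.2
    obtain ⟨σ, lam, hnorm, hUij⟩ := scaled_perm_of_orth U hU h0
    refine ⟨σ, lam, hnorm, ?_, hUij⟩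
    intro i j hij
    have hσij : σ i ≠ σ j := fun h => hij (σ.injective h)
    have hinv : r (σ j) (σ i) * r (σ i) (σ j) = 1 := by
      rw [(hr (σ i) (σ j) hσij).2.1]
      exact inv_mul_cancel₀ (hr (σ i) (σ j) hσij).1
    have h1 := mem_apply_off (hsub _ (gen_mem_qIdeal q hij)) hσij hinv
    rw [PhiU_gen_apply, PhiU_gen_apply] at h1
    simp only [hUij, hσij, Ne.symm hσij, if_true, if_false, ite_true, ite_false,
      eq_self_iff_true, mul_zero, zero_mul, sub_zero, zero_sub, mul_neg] at h1
    have hlam : lam i * lam j ≠ 0 :=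
      mul_ne_zero (fun h => by simpa [h] using hnorm i) (fun h => by simpa [h] using hnorm j)
    -- h1 : lam i * lam j - q i j * (0 * 0) + r (σ j) (σ i) * (0 * 0 - q i j * (lam j * lam i)) = 0
    have key : lam i * lam j * (1 - r (σ j) (σ i) * q i j) = 0 := by linear_combination h1
    rcases mul_eq_zero.1 key with h | h
    · exact absurd h hlam
    · have h2 : r (σ j) (σ i) * q i j = 1 := by linear_combination -h
      rw [(hr (σ i) (σ j) hσij).2.1, inv_mul_eq_one₀ (hr (σ i) (σ j) hσij).1] at h2
      exact h2
  · rintro ⟨σ, lam, hnorm, hcomp, hUij⟩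
    have hlam0 : ∀ i, lam i ≠ 0 := by
      intro i h; have := hnorm i; rw [h] at this; simp at this
    have hXi : ∀ i, PhiU U (Xg d i) = lam i • Xg d (σ i) := PhiU_scaled_Xg U σ lam hUij
    set V : Matrix (Fin d) (Fin d) ℂ :=
      fun k j => if j = σ.symm k then (lam (σ.symm k))⁻¹ else 0 with hV
    have hXV : ∀ k, PhiU V (Xg d k) = (lam (σ.symm k))⁻¹ • Xg d (σ.symm k) :=
      PhiU_scaled_Xg V σ.symm (fun k => (lam (σ.symm k))⁻¹) (fun i j => rfl)
    have hid : (PhiU U).comp (PhiU V) = AlgHom.id ℂ (FreeAlg d) := by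
      apply freealg_hom_ext
      intro k
      rw [AlgHom.comp_apply, hXV, map_smul, hXi, smul_smul, Equiv.apply_symm_apply,
        inv_mul_cancel₀ (hlam0 _), one_smul, AlgHom.id_apply]
    have hcomp' : ∀ k l : Fin d, k ≠ l → q (σ.symm k) (σ.symm l) = r k l := by
      intro k l hkl
      have := hcomp (σ.symm k) (σ.symm l) (fun h => hkl (by
        have := congrArg σ h; rwa [Equiv.apply_symm_apply, Equiv.apply_symm_apply] at this))
      rw [Equiv.apply_symm_apply, Equiv.apply_symm_apply] at this
      exact this.symm
    apply Set.Subset.antisymm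
    · rintro _ ⟨p, hp, rfl⟩
      exact image_subset_of_scaled_perm U σ lam hXi hcomp hp
    · intro p hp
      refine ⟨PhiU V p, ?_, ?_⟩
      · exact image_subset_of_scaled_perm V σ.symm _ hXV hcomp' hp
      · exact DFunLike.congr_fun hid p

end Aux

namespace Aux
variable {d : ℕ}

lemma permMatrix_unitary (σ : Equiv.Perm (Fin d)) :
    (Matrix.of fun i j => if j = σ i then (1:ℂ) else 0) ∈ Matrix.unitaryGroup (Fin d) ℂ := by
  classical
  rw [Matrix.mem_unitaryGroup_iff]
  ext i j
  rw [Matrix.mul_apply, Matrix.one_apply]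
  simp only [Matrix.star_eq_conjTranspose, Matrix.conjTranspose_apply, Matrix.of_apply,
    apply_ite (starRingEnd ℂ), map_one, map_zero, ite_mul, one_mul, zero_mul, mul_ite,
    mul_one, mul_zero]
  rw [Finset.sum_ite_eq' Finset.univ (σ i)]
  simp [Equiv.apply_eq_iff_eq]
end Aux

/-- **Classification of the `q`-commuting subproduct systems** (via the correspondence
between homogeneous ideals and subproduct systems): for admissible matrices `q, r` with
off-diagonal entries `≠ 1`, a unitary change of variables maps `I_q` onto `I_r` iff
`r = U_σ q U_σ⁻¹` for a permutation `σ`; and the unitaries achieving this are exactly the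
scaled permutation matrices compatible with `q` and `r`. -/
theorem stmt12 (d : ℕ) (hd : 1 ≤ d) (q r : Fin d → Fin d → ℂ)
    (hq : ∀ i j : Fin d, i ≠ j → q i j ≠ 0 ∧ q j i = (q i j)⁻¹ ∧ q i j ≠ 1)
    (hr : ∀ i j : Fin d, i ≠ j → r i j ≠ 0 ∧ r j i = (r i j)⁻¹ ∧ r i j ≠ 1) :
    ((∃ U ∈ Matrix.unitaryGroup (Fin d) ℂ,
        ⇑(PhiU U) '' (qIdeal q : Set (FreeAlg d)) = (qIdeal r : Set (FreeAlg d))) ↔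
      ∃ σ : Equiv.Perm (Fin d), ∀ i j : Fin d, i ≠ j → r (σ i) (σ j) = q i j) ∧
    (∀ U ∈ Matrix.unitaryGroup (Fin d) ℂ,
      (⇑(PhiU U) '' (qIdeal q : Set (FreeAlg d)) = (qIdeal r : Set (FreeAlg d)) ↔
        ∃ (σ : Equiv.Perm (Fin d)) (lam : Fin d → ℂ),
          (∀ i, ‖lam i‖ = 1) ∧
          (∀ i j : Fin d, i ≠ j → r (σ i) (σ j) = q i j) ∧
          (∀ i j : Fin d, U i j = if j = σ i then lam i else 0))) := by
  refine ⟨⟨?_, ?_⟩, fun U hU => Aux.main2 q r hq hr U hU⟩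
  · rintro ⟨U, hU, himg⟩
    obtain ⟨σ, lam, -, hcomp, -⟩ := (Aux.main2 q r hq hr U hU).1 himg
    exact ⟨σ, hcomp⟩
  · rintro ⟨σ, hcomp⟩
    refine ⟨Matrix.of fun i j => if j = σ i then (1:ℂ) else 0, Aux.permMatrix_unitary σ, ?_⟩
    exact (Aux.main2 q r hq hr _ (Aux.permMatrix_unitary σ)).2
      ⟨σ, fun _ => 1, by simp, hcomp, fun i j => rfl⟩
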